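/- Let f : 2^Ω → ℝ be a submodular function, and let F and f̂ be its multilinear and Lovász extensions, respectively. Then F(x) ≥ f̂(x) for every x ∈ [0,1]^Ω. -/

import Mathlib

open Finset

namespace Stmt4Aux
set_option linter.unusedSectionVars false

variable {Ω : Type*} [Fintype Ω] [DecidableEq Ω] {n : ℕ}

/-- Prefix sets of a sorted order. -/
def Sk (σ : Fin n ≃ Ω) (k : ℕ) : Finset Ω := univ.filter (fun o => (σ.symm o : ℕ) < k)

/-- Greedy weights. -/
def wt (f : Finset Ω → ℝ) (σ : Fin n ≃ Ω) (o : Ω) : ℝ :=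
  f (Sk σ ((σ.symm o : ℕ) + 1)) - f (Sk σ (σ.symm o : ℕ))

lemma mem_Sk (σ : Fin n ≃ Ω) {k : ℕ} {o : Ω} : o ∈ Sk σ k ↔ (σ.symm o : ℕ) < k := by
  simp [Sk]

lemma Sk_zero (σ : Fin n ≃ Ω) : Sk σ 0 = ∅ := by
  ext o; simp [mem_Sk]

lemma Sk_univ (σ : Fin n ≃ Ω) {k : ℕ} (hk : n ≤ k) : Sk σ k = univ := by
  ext o; simpa [mem_Sk] using lt_of_lt_of_le (σ.symm o).isLt hk

lemma Sk_succ_of_lt (σ : Fin n ≃ Ω) {k : ℕ} (hk : k < n) :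
    Sk σ (k + 1) = insert (σ ⟨k, hk⟩) (Sk σ k) := by
  ext o
  simp only [mem_Sk, mem_insert]
  constructor
  · intro h
    rcases Nat.lt_succ_iff_lt_or_eq.1 h with h | h
    · exact Or.inr h
    · left
      have : σ.symm o = ⟨k, hk⟩ := Fin.ext h
      rw [← this]; simp
  · rintro (rfl | h)
    · simp [hk]
    · omega

lemma Sk_succ_of_ge (σ : Fin n ≃ Ω) {k : ℕ} (hk : n ≤ k) : Sk σ (k + 1) = Sk σ k := by
  rw [Sk_univ σ hk, Sk_univ σ (le_trans hk (Nat.le_succ k))]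

lemma notMem_Sk_self (σ : Fin n ≃ Ω) {k : ℕ} (hk : k < n) : σ ⟨k, hk⟩ ∉ Sk σ k := by
  simp [mem_Sk]

lemma wt_apply (f : Finset Ω → ℝ) (σ : Fin n ≃ Ω) {k : ℕ} (hk : k < n) :
    wt f σ (σ ⟨k, hk⟩) = f (Sk σ (k + 1)) - f (Sk σ k) := by
  simp [wt]

/-- Telescoping along the chain. -/
lemma telescope (f : Finset Ω → ℝ) (σ : Fin n ≃ Ω) (k : ℕ) :
    f (Sk σ k) = f ∅ + ∑ o ∈ Sk σ k, wt f σ o := by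
  induction k with
  | zero => simp [Sk_zero]
  | succ k ih =>
    by_cases hk : k < n
    · rw [Sk_succ_of_lt σ hk, sum_insert (notMem_Sk_self σ hk), wt_apply f σ hk,
        Sk_succ_of_lt σ hk]
      rw [ih]; ring
    · rw [Sk_succ_of_ge σ (le_of_not_gt hk)]; exact ih

/-- Greedy feasibility from submodularity. -/
lemma feasible (f : Finset Ω → ℝ)
    (hsub : ∀ A B : Finset Ω, f A + f B ≥ f (A ∪ B) + f (A ∩ B))
    (σ : Fin n ≃ Ω) (A : Finset Ω) :
    f ∅ + ∑ o ∈ A, wt f σ o ≤ f A := by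
  have key : ∀ k, f ∅ + ∑ o ∈ A ∩ Sk σ k, wt f σ o ≤ f (A ∩ Sk σ k) := by
    intro k
    induction k with
    | zero => simp [Sk_zero]
    | succ k ih =>
      by_cases hk : k < n
      · set a := σ ⟨k, hk⟩ with ha
        by_cases haA : a ∈ A
        · have h1 : A ∩ Sk σ (k + 1) = insert a (A ∩ Sk σ k) := by
            rw [Sk_succ_of_lt σ hk, inter_insert_of_mem haA]
          have h2 : (A ∩ Sk σ (k + 1)) ∪ Sk σ k = Sk σ (k + 1) := by
            rw [h1, Sk_succ_of_lt σ hk, insert_union,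
              union_eq_right.2 (inter_subset_right)]
          have h3 : (A ∩ Sk σ (k + 1)) ∩ Sk σ k = A ∩ Sk σ k := by
            rw [h1, insert_inter_of_notMem (notMem_Sk_self σ hk),
              inter_assoc, inter_self]
          have hs := hsub (A ∩ Sk σ (k + 1)) (Sk σ k)
          rw [h2, h3] at hs
          have hsum : ∑ o ∈ A ∩ Sk σ (k + 1), wt f σ o
              = wt f σ a + ∑ o ∈ A ∩ Sk σ k, wt f σ o := by
            rw [h1, sum_insert (fun h => notMem_Sk_self σ hk (mem_of_mem_inter_right h))]
          have hwa : wt f σ a = f (Sk σ (k + 1)) - f (Sk σ k) := wt_apply f σ hk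
          linarith
        · have h1 : A ∩ Sk σ (k + 1) = A ∩ Sk σ k := by
            rw [Sk_succ_of_lt σ hk, inter_insert_of_notMem haA]
          rw [h1]; exact ih
      · rw [Sk_succ_of_ge σ (le_of_not_gt hk)]; exact ih
  have := key n
  rwa [Sk_univ σ le_rfl, inter_univ] at this

lemma card_filter_le (σ : Fin n ≃ Ω) (j : Fin n) :
    (univ.filter (fun o => σ.symm o ≤ j)).card = (j : ℕ) + 1 := by
  have h : univ.filter (fun o : Ω => σ.symm o ≤ j) = (Finset.Iic j).image σ := by
    ext o
    simp only [mem_filter, mem_univ, true_and, mem_image, mem_Iic]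
    constructor
    · intro h; exact ⟨σ.symm o, h, by simp⟩
    · rintro ⟨i, hi, rfl⟩; simpa using hi
  rw [h, card_image_of_injective _ σ.injective, Fin.card_Iic]

lemma card_filter_lt (σ : Fin n ≃ Ω) (j : Fin n) :
    (univ.filter (fun o => σ.symm o < j)).card = (j : ℕ) := by
  have h : univ.filter (fun o : Ω => σ.symm o < j) = (Finset.Iio j).image σ := by
    ext o
    simp only [mem_filter, mem_univ, true_and, mem_image, mem_Iio]
    constructor
    · intro h; exact ⟨σ.symm o, h, by simp⟩
    · rintro ⟨i, hi, rfl⟩; simpa using hi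
  rw [h, card_image_of_injective _ σ.injective, Fin.card_Iio]

/-- A threshold set is a prefix of the sorted order. -/
lemma threshold_eq_Sk (σ : Fin n ≃ Ω) (x : Ω → ℝ) (hanti : Antitone (x ∘ σ)) (c : ℝ) :
    univ.filter (fun o => c ≤ x o) = Sk σ ((univ.filter (fun o => c ≤ x o)).card) := by
  set B := univ.filter (fun o => c ≤ x o) with hB
  have hdown : ∀ o ∈ B, ∀ o' : Ω, σ.symm o' ≤ σ.symm o → o' ∈ B := by
    intro o ho o' hle
    have := hanti hle
    simp only [Function.comp_apply, Equiv.apply_symm_apply] at this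
    simp only [hB, mem_filter, mem_univ, true_and] at ho ⊢
    linarith
  ext o
  rw [mem_Sk]
  constructor
  · intro ho
    have hsub : univ.filter (fun o' => σ.symm o' ≤ σ.symm o) ⊆ B := by
      intro o' ho'
      simp only [mem_filter, mem_univ, true_and] at ho'
      exact hdown o ho o' ho'
    have := card_le_card hsub
    rw [card_filter_le] at this
    omega
  · intro hlt
    by_contra hoB
    have hsub : B ⊆ univ.filter (fun o' => σ.symm o' < σ.symm o) := by
      intro o' ho'
      simp only [mem_filter, mem_univ, true_and]
      by_contra hle
      exact hoB (hdown o' ho' o (le_of_not_gt hle))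
    have := card_le_card hsub
    rw [card_filter_lt] at this
    omega

lemma sum_p (x : Ω → ℝ) :
    ∑ S : Finset Ω, ((∏ e ∈ S, x e) * ∏ e ∈ Sᶜ, (1 - x e)) = 1 := by
  have h := Finset.prod_add x (fun e => 1 - x e) univ
  simp only [add_sub_cancel, prod_const_one, powerset_univ] at h
  calc ∑ S : Finset Ω, ((∏ e ∈ S, x e) * ∏ e ∈ Sᶜ, (1 - x e))
      = ∑ S : Finset Ω, ((∏ e ∈ S, x e) * ∏ e ∈ univ \ S, (1 - x e)) :=
        Finset.sum_congr rfl (fun S _ => by rw [compl_eq_univ_sdiff])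
    _ = 1 := h.symm

lemma sum_p_mem (x : Ω → ℝ) (o : Ω) :
    ∑ S : Finset Ω, (if o ∈ S then (∏ e ∈ S, x e) * ∏ e ∈ Sᶜ, (1 - x e) else 0) = x o := by
  rw [← Finset.sum_filter]
  have hbij : ∑ S ∈ univ.filter (fun S : Finset Ω => o ∈ S),
        ((∏ e ∈ S, x e) * ∏ e ∈ Sᶜ, (1 - x e))
      = ∑ t ∈ (univ.erase o).powerset,
        ((∏ e ∈ insert o t, x e) * ∏ e ∈ (insert o t)ᶜ, (1 - x e)) := by
    apply Finset.sum_nbij' (i := fun S => S.erase o) (j := fun t => insert o t)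
    · intro S hS
      simp only [mem_filter, mem_univ, true_and] at hS
      simp only [mem_powerset]
      exact erase_subset_erase o (subset_univ S)
    · intro t ht
      simp only [mem_filter, mem_univ, true_and, mem_insert_self]
    · intro S hS
      simp only [mem_filter, mem_univ, true_and] at hS
      exact insert_erase hS
    · intro t ht
      simp only [mem_powerset] at ht
      exact erase_insert (fun h => (mem_erase.1 (ht h)).1 rfl)
    · intro S hS
      simp only [mem_filter, mem_univ, true_and] at hS
      rw [insert_erase hS]
  rw [hbij]
  have key : ∀ t ∈ (univ.erase o).powerset,
      ((∏ e ∈ insert o t, x e) * ∏ e ∈ (insert o t)ᶜ, (1 - x e))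
        = x o * ((∏ e ∈ t, x e) * ∏ e ∈ (univ.erase o) \ t, (1 - x e)) := by
    intro t ht
    simp only [mem_powerset] at ht
    have hot : o ∉ t := fun h => (mem_erase.1 (ht h)).1 rfl
    have hc : (insert o t)ᶜ = (univ.erase o) \ t := by
      ext e
      simp only [mem_compl, mem_insert, mem_sdiff, mem_erase, mem_univ, and_true]
      tauto
    rw [prod_insert hot, hc]; ring
  rw [Finset.sum_congr rfl key, ← Finset.mul_sum]
  have h := Finset.prod_add x (fun e => 1 - x e) (univ.erase o)
  simp only [add_sub_cancel, prod_const_one] at h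
  rw [← h, mul_one]

lemma indicator_integrable (c r : ℝ) :
    IntervalIntegrable ((Set.Iic c).indicator (fun _ => r)) MeasureTheory.volume 0 1 := by
  rw [intervalIntegrable_iff, Set.uIoc_of_le (by norm_num : (0:ℝ) ≤ 1)]
  exact (MeasureTheory.integrableOn_const
    measure_Ioc_lt_top.ne).indicator measurableSet_Iic

lemma indicator_integral (c r : ℝ) (h : c ∈ Set.Icc (0:ℝ) 1) :
    (∫ t in (0:ℝ)..1, (Set.Iic c).indicator (fun _ => r) t) = c * r := by
  have hs : (Set.Iic c) = {t : ℝ | t ≤ c} := rfl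
  rw [hs, intervalIntegral.integral_indicator h, intervalIntegral.integral_const]
  simp [mul_comm]

end Stmt4Aux

open Stmt4Aux in
/-- the multilinear extension dominates the Lovász extension of a
submodular function on `[0,1]^Ω`. -/
theorem stmt_4 {Ω : Type*} [Fintype Ω] [DecidableEq Ω] (f : Finset Ω → ℝ)
    (hsub : ∀ A B : Finset Ω, f A + f B ≥ f (A ∪ B) + f (A ∩ B))
    (x : Ω → ℝ) (hx : ∀ e, x e ∈ Set.Icc (0:ℝ) 1) :
    (∑ S : Finset Ω, f S * ((∏ e ∈ S, x e) * ∏ e ∈ Sᶜ, (1 - x e)))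
      ≥ ∫ lam in (0:ℝ)..1, f (Finset.univ.filter (fun e => lam ≤ x e)) := by
  classical
  -- a sorted enumeration of Ω
  set n := Fintype.card Ω with hn
  set g : Ω ≃ Fin n := Fintype.equivFin Ω with hg
  set h : Fin n → ℝ := fun i => -x (g.symm i) with hh
  set σ : Fin n ≃ Ω := (Tuple.sort h).trans g.symm with hσ
  have hanti : Antitone (x ∘ σ) := by
    intro i j hij
    have hmono := Tuple.monotone_sort h hij
    simp only [Function.comp_apply, hh] at hmono
    simp only [Function.comp_apply, hσ, Equiv.trans_apply]
    linarith
  set p : Finset Ω → ℝ := fun S => (∏ e ∈ S, x e) * ∏ e ∈ Sᶜ, (1 - x e) with hp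
  have hp_nonneg : ∀ S, 0 ≤ p S := by
    intro S
    exact mul_nonneg (prod_nonneg fun e _ => (hx e).1)
      (prod_nonneg fun e _ => by linarith [(hx e).2])
  -- pointwise description of the Lovász integrand
  have hpoint : ∀ c : ℝ, f (univ.filter (fun o => c ≤ x o))
      = f ∅ + ∑ o : Ω, (Set.Iic (x o)).indicator (fun _ => wt f σ o) c := by
    intro c
    have hsum : ∑ o : Ω, (Set.Iic (x o)).indicator (fun _ => wt f σ o) c
        = ∑ o ∈ univ.filter (fun o => c ≤ x o), wt f σ o := by
      rw [Finset.sum_filter]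
      refine Finset.sum_congr rfl fun o _ => ?_
      by_cases hc : c ≤ x o
      · rw [Set.indicator_of_mem (Set.mem_Iic.2 hc), if_pos hc]
      · rw [Set.indicator_of_notMem (fun hm => hc (Set.mem_Iic.1 hm)), if_neg hc]
    rw [hsum]
    calc f (univ.filter (fun o => c ≤ x o))
        = f (Sk σ ((univ.filter (fun o => c ≤ x o)).card)) := by
          rw [← threshold_eq_Sk σ x hanti c]
      _ = f ∅ + ∑ o ∈ Sk σ ((univ.filter (fun o => c ≤ x o)).card), wt f σ o :=
          telescope f σ _
      _ = f ∅ + ∑ o ∈ univ.filter (fun o => c ≤ x o), wt f σ o := by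
          rw [← threshold_eq_Sk σ x hanti c]
  -- compute the Lovász integral
  have hint : (∫ lam in (0:ℝ)..1, f (univ.filter (fun e => lam ≤ x e)))
      = f ∅ + ∑ o : Ω, x o * wt f σ o := by
    rw [intervalIntegral.integral_congr
      (g := fun c => f ∅ + ∑ o : Ω, (Set.Iic (x o)).indicator (fun _ => wt f σ o) c)
      (fun c _ => hpoint c)]
    have h2 : IntervalIntegrable
        (fun c : ℝ => ∑ o : Ω, (Set.Iic (x o)).indicator (fun _ => wt f σ o) c)
        MeasureTheory.volume 0 1 := by
      have hI := IntervalIntegrable.sum (μ := MeasureTheory.volume) (a := (0:ℝ)) (b := 1)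
        univ (fun o _ => indicator_integrable (x o) (wt f σ o))
      have hfun : (fun c : ℝ => ∑ o : Ω, (Set.Iic (x o)).indicator (fun _ => wt f σ o) c)
          = ∑ o : Ω, (Set.Iic (x o)).indicator (fun _ => wt f σ o) := by
        ext c; simp
      rw [hfun]; exact hI
    rw [intervalIntegral.integral_add intervalIntegrable_const h2,
      intervalIntegral.integral_const,
      intervalIntegral.integral_finset_sum
        (fun o _ => indicator_integrable (x o) (wt f σ o))]
    simp only [sub_zero, one_smul]
    congr 1
    exact Finset.sum_congr rfl fun o _ => indicator_integral (x o) (wt f σ o) (hx o)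
  -- lower bound the multilinear extension
  have hlow : ∑ S : Finset Ω, f S * p S
      ≥ ∑ S : Finset Ω, (f ∅ + ∑ o ∈ S, wt f σ o) * p S := by
    refine Finset.sum_le_sum fun S _ => ?_
    exact mul_le_mul_of_nonneg_right (feasible f hsub σ S) (hp_nonneg S)
  have hexp : ∑ S : Finset Ω, (f ∅ + ∑ o ∈ S, wt f σ o) * p S
      = f ∅ + ∑ o : Ω, x o * wt f σ o := by
    have h1 : ∀ S : Finset Ω, (f ∅ + ∑ o ∈ S, wt f σ o) * p S
        = f ∅ * p S + ∑ o : Ω, (if o ∈ S then wt f σ o * p S else 0) := by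
      intro S
      rw [add_mul, Finset.sum_mul]
      congr 1
      rw [← Finset.sum_filter]
      congr 1
      ext o
      simp
    rw [Finset.sum_congr rfl fun S _ => h1 S, Finset.sum_add_distrib, ← Finset.mul_sum,
      sum_p x, mul_one, Finset.sum_comm]
    congr 1
    refine Finset.sum_congr rfl fun o _ => ?_
    have h2 : ∀ S : Finset Ω, (if o ∈ S then wt f σ o * p S else 0)
        = wt f σ o * (if o ∈ S then p S else 0) := by
      intro S; by_cases hS : o ∈ S <;> simp [hS]
    rw [Finset.sum_congr rfl fun S _ => h2 S, ← Finset.mul_sum, sum_p_mem x o, mul_comm]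
  rw [hint, ← hexp]
  exact hlow
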